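/- For real numbers a_1,...,a_N and b_1,...,b_N with a = \sum a_i and b = \sum b_i, one has \sqrt{a^2 + \sqrt{a^4 + b^2}} \le \sum_i \sqrt{a_i^2 + \sqrt{a_i^4 + b_i^2}}. -/

import Mathlib

set_option maxHeartbeats 1000000

open Finset Real

noncomputable def ff (a b : ℝ) : ℝ := Real.sqrt (a ^ 2 + Real.sqrt (a ^ 4 + b ^ 2))

lemma ff_nonneg (a b : ℝ) : 0 ≤ ff a b := Real.sqrt_nonneg _

lemma ff_sq (a b : ℝ) : (ff a b) ^ 2 = a ^ 2 + Real.sqrt (a ^ 4 + b ^ 2) := by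
  rw [ff, Real.sq_sqrt]
  positivity

lemma ff_abs (a b : ℝ) : ff |a| |b| = ff a b := by
  have h4 : |a| ^ 4 = a ^ 4 := by
    rw [← abs_pow]; exact abs_of_nonneg (by positivity)
  rw [ff, ff, sq_abs, sq_abs, h4]

lemma ff_mono {a a' b b' : ℝ} (ha : |a| ≤ a') (hb : |b| ≤ b') : ff a b ≤ ff a' b' := by
  have h2 : a ^ 2 ≤ a' ^ 2 := by nlinarith [abs_nonneg a, sq_abs a]
  have h4 : a ^ 4 ≤ a' ^ 4 := by nlinarith [abs_nonneg a, sq_abs a, sq_nonneg a, sq_nonneg a']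
  have hb2 : b ^ 2 ≤ b' ^ 2 := by nlinarith [abs_nonneg b, sq_abs b]
  exact Real.sqrt_le_sqrt (add_le_add h2 (Real.sqrt_le_sqrt (add_le_add h4 hb2)))

lemma key_nonneg {a₁ b₁ a₂ b₂ : ℝ} (ha₁ : 0 ≤ a₁) (hb₁ : 0 ≤ b₁) (ha₂ : 0 ≤ a₂)
    (hb₂ : 0 ≤ b₂) : ff (a₁ + a₂) (b₁ + b₂) ≤ ff a₁ b₁ + ff a₂ b₂ := by
  set f₁ := ff a₁ b₁ with hf₁def
  set f₂ := ff a₂ b₂ with hf₂def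
  have hf₁0 : 0 ≤ f₁ := ff_nonneg _ _
  have hf₂0 : 0 ≤ f₂ := ff_nonneg _ _
  set s₁ := Real.sqrt (a₁ ^ 4 + b₁ ^ 2) with hs₁def
  set s₂ := Real.sqrt (a₂ ^ 4 + b₂ ^ 2) with hs₂def
  have hs₁0 : 0 ≤ s₁ := Real.sqrt_nonneg _
  have hs₂0 : 0 ≤ s₂ := Real.sqrt_nonneg _
  have hs₁ : s₁ ^ 2 = a₁ ^ 4 + b₁ ^ 2 := Real.sq_sqrt (by positivity)
  have hs₂ : s₂ ^ 2 = a₂ ^ 4 + b₂ ^ 2 := Real.sq_sqrt (by positivity)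
  have hs₁a : a₁ ^ 2 ≤ s₁ := Real.le_sqrt_of_sq_le (by nlinarith [sq_nonneg b₁])
  have hs₂a : a₂ ^ 2 ≤ s₂ := Real.le_sqrt_of_sq_le (by nlinarith [sq_nonneg b₂])
  have hf₁ : f₁ ^ 2 = a₁ ^ 2 + s₁ := ff_sq a₁ b₁
  have hf₂ : f₂ ^ 2 = a₂ ^ 2 + s₂ := ff_sq a₂ b₂
  -- Cauchy-Schwarz : a₁²a₂² + b₁b₂ ≤ s₁ s₂
  have hC : a₁ ^ 2 * a₂ ^ 2 + b₁ * b₂ ≤ s₁ * s₂ := by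
    have hsq : (a₁ ^ 2 * a₂ ^ 2 + b₁ * b₂) ^ 2 ≤ (s₁ * s₂) ^ 2 := by
      nlinarith [sq_nonneg (a₁ ^ 2 * b₂ - a₂ ^ 2 * b₁)]
    have h0 : 0 ≤ a₁ ^ 2 * a₂ ^ 2 + b₁ * b₂ := by positivity
    have h0' : 0 ≤ s₁ * s₂ := mul_nonneg hs₁0 hs₂0
    exact (pow_le_pow_iff_left₀ h0 h0' (by norm_num)).mp hsq
  -- bound on the inner sqrt of the sum
  have hT : Real.sqrt ((a₁ + a₂) ^ 4 + (b₁ + b₂) ^ 2) ≤ 2 * a₁ * a₂ + s₁ + s₂ := by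
    rw [show 2 * a₁ * a₂ + s₁ + s₂ = Real.sqrt ((2 * a₁ * a₂ + s₁ + s₂) ^ 2) from
      (Real.sqrt_sq (by positivity)).symm]
    apply Real.sqrt_le_sqrt
    nlinarith [hC, mul_nonneg (mul_nonneg ha₁ ha₂) (add_nonneg hs₁0 hs₂0),
      mul_nonneg (mul_nonneg ha₁ ha₂) hs₁0, mul_nonneg (mul_nonneg ha₁ ha₂) hs₂0,
      mul_le_mul_of_nonneg_left hs₁a (mul_nonneg ha₁ ha₂),
      mul_le_mul_of_nonneg_left hs₂a (mul_nonneg ha₁ ha₂)]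
  -- f₁ f₂ ≥ 2 a₁ a₂
  have hff : 2 * a₁ * a₂ ≤ f₁ * f₂ := by
    have e₁ : 2 * a₁ ^ 2 ≤ f₁ ^ 2 := by nlinarith
    have e₂ : 2 * a₂ ^ 2 ≤ f₂ ^ 2 := by nlinarith
    have hsq : (2 * a₁ * a₂) ^ 2 ≤ (f₁ * f₂) ^ 2 := by
      nlinarith [mul_le_mul e₁ e₂ (by positivity) (sq_nonneg f₁)]
    exact (pow_le_pow_iff_left₀ (by positivity) (mul_nonneg hf₁0 hf₂0) (by norm_num)).mp hsq
  rw [ff, show f₁ + f₂ = Real.sqrt ((f₁ + f₂) ^ 2) from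
    (Real.sqrt_sq (add_nonneg hf₁0 hf₂0)).symm]
  apply Real.sqrt_le_sqrt
  nlinarith [hT, hff]

lemma key (a₁ b₁ a₂ b₂ : ℝ) : ff (a₁ + a₂) (b₁ + b₂) ≤ ff a₁ b₁ + ff a₂ b₂ := by
  have h1 : ff (a₁ + a₂) (b₁ + b₂) ≤ ff (|a₁| + |a₂|) (|b₁| + |b₂|) :=
    ff_mono (abs_add_le _ _) (abs_add_le _ _)
  have h2 : ff (|a₁| + |a₂|) (|b₁| + |b₂|) ≤ ff |a₁| |b₁| + ff |a₂| |b₂| :=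
    key_nonneg (abs_nonneg _) (abs_nonneg _) (abs_nonneg _) (abs_nonneg _)
  rw [ff_abs, ff_abs] at h2
  exact le_trans h1 h2

theorem subadd_nested_sqrt (N : ℕ) (a b : Fin N → ℝ) :
    Real.sqrt ((∑ i, a i) ^ 2 + Real.sqrt ((∑ i, a i) ^ 4 + (∑ i, b i) ^ 2)) ≤
      ∑ i, Real.sqrt ((a i) ^ 2 + Real.sqrt ((a i) ^ 4 + (b i) ^ 2)) := by
  have main : ∀ (n : ℕ) (a b : Fin n → ℝ), ff (∑ i, a i) (∑ i, b i) ≤ ∑ i, ff (a i) (b i) := by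
    intro n
    induction n with
    | zero => intro a b; simp [ff]
    | succ m ih =>
      intro a b
      rw [Fin.sum_univ_succ a, Fin.sum_univ_succ b, Fin.sum_univ_succ (fun i => ff (a i) (b i))]
      exact le_trans (key _ _ _ _)
        (add_le_add_right (ih (fun i => a i.succ) (fun i => b i.succ)) _)
  simpa only [ff] using main N a b
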